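/- Let m ≥ 1 and N be integers with N + 1 ≥ m, let x_0 < x_1 < … < x_N be points of [0,1], and let z ∈ [0,1]. Suppose (C̊_0,…,C̊_N, p_0,…,p_{m−2}, d) solves the system: Σ_{γ=0}^N C̊_γ G_m(x_β − x_γ) + Σ_{α=0}^{m−2} p_α x_β^α + d e^{−x_β} = G_m(z − x_β) for β = 0,…,N; Σ_{γ=0}^N C̊_γ x_γ^α = z^α for α = 0,…,m−2; Σ_{γ=0}^N C̊_γ e^{−x_γ} = e^{−z}. Then for every C ∈ ℝ^{N+1} satisfying the same constraints Σ_{γ} C_γ x_γ^α = z^α (α = 0,…,m−2) and Σ_{γ} C_γ e^{−x_γ} = e^{−z}, one has Q(C̊) ≤ Q(C), where Q(C) = (−1)^m ( Σ_{β=0}^N Σ_{γ=0}^N C_β C_γ G_m(x_β − x_γ) − 2 Σ_{β=0}^N C_β G_m(z − x_β) ). -/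

import Mathlib

/-- `G_m(x) = (sgn x)/2 · ((eˣ − e⁻ˣ)/2 − Σ_{k=1}^{m−1} x^{2k−1}/(2k−1)!)`, with
`sgn 0 = 0` and the sum empty for `m = 1`. -/
noncomputable def Gm (m : ℕ) (x : ℝ) : ℝ :=
  Real.sign x / 2 * ((Real.exp x - Real.exp (-x)) / 2
    - ∑ k ∈ Finset.range (m - 1), x ^ (2 * k + 1) / (Nat.factorial (2 * k + 1)))

/-- `Q(C) = (−1)^m (Σ_β Σ_γ C_β C_γ G_m(x_β − x_γ) − 2 Σ_β C_β G_m(z − x_β))`, the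
squared norm of the error functional of the interpolation formula `Σ C_β φ(x_β) ≈ φ(z)`
on `W₂^{(m,m−1)}(0,1)`. -/
noncomputable def Qm (m N : ℕ) (x : Fin (N + 1) → ℝ) (z : ℝ)
    (C : Fin (N + 1) → ℝ) : ℝ :=
  (-1 : ℝ) ^ m *
    ((∑ β, (∑ γ, C β * C γ * Gm m (x β - x γ)))
      - 2 * ∑ β, C β * Gm m (z - x β))

open Finset

/-- Taylor remainder of `e^{-v}` of order `n`, signed: `T n v = Σ_{j≥n} (-1)^{j-n} v^j/j!`. -/
noncomputable def Tr (n : ℕ) (v : ℝ) : ℝ :=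
  (-1 : ℝ)^n * (Real.exp (-v) - ∑ j ∈ Finset.range n, (-v)^j / (Nat.factorial j))

/-- odd Taylor part of sinh -/
noncomputable def Wo (n : ℕ) (v : ℝ) : ℝ :=
  ∑ k ∈ Finset.range n, v^(2*k+1) / (Nat.factorial (2*k+1))

noncomputable def We (n : ℕ) (v : ℝ) : ℝ :=
  ∑ k ∈ Finset.range n, v^(2*k) / (Nat.factorial (2*k))

lemma Tr_zero (v : ℝ) : Tr 0 v = Real.exp (-v) := by simp [Tr]

lemma Tr_at_zero {n : ℕ} (hn : 1 ≤ n) : Tr n 0 = 0 := by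
  have h : ∑ j ∈ Finset.range n, ((0:ℝ))^j / (Nat.factorial j) = 1 := by
    rw [Finset.sum_eq_single 0]
    · simp
    · intro b _ hb; simp [zero_pow hb]
    · intro h; simp at h; omega
  simp [Tr, neg_zero, h]

lemma Wo_at_zero (n : ℕ) : Wo n 0 = 0 := by simp [Wo]

lemma Wo_neg (n : ℕ) (v : ℝ) : Wo n (-v) = -Wo n v := by
  unfold Wo
  rw [← Finset.sum_neg_distrib]
  refine Finset.sum_congr rfl fun k _ => ?_
  rw [Odd.neg_pow ⟨k, by ring⟩, neg_div]

lemma hasDerivAt_sumpow (n : ℕ) (v : ℝ) :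
    HasDerivAt (fun v : ℝ => ∑ j ∈ Finset.range (n+1), (-v)^j / (Nat.factorial j))
      (-(∑ j ∈ Finset.range n, (-v)^j / (Nat.factorial j))) v := by
  have h : ∀ j : ℕ, HasDerivAt (fun v : ℝ => (-v)^j / (Nat.factorial j))
      (((j : ℝ) * (-v)^(j-1) * (-1)) / (Nat.factorial j)) v := by
    intro j
    have h1 : HasDerivAt (fun v : ℝ => (-v)) (-1) v := (hasDerivAt_id v).neg
    have h2 := (hasDerivAt_pow j (-v)).comp v h1
    exact h2.div_const _
  have hsum := HasDerivAt.fun_sum (fun j (_ : j ∈ Finset.range (n+1)) => h j)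
  refine hsum.congr_deriv (Eq.symm ?_)
  rw [Finset.sum_range_succ']
  have h0 : ((0:ℕ):ℝ) * (-v)^(0-1) * (-1) / ((Nat.factorial 0 : ℕ) : ℝ) = 0 := by simp
  rw [h0, add_zero, ← Finset.sum_neg_distrib]
  refine Finset.sum_congr rfl fun i _ => ?_
  have : ((i:ℝ)+1) ≠ 0 := by positivity
  field_simp [Nat.factorial_succ]
  rw [Nat.add_sub_cancel, Nat.factorial_succ]; push_cast
  ring

lemma hasDerivAt_Tr (n : ℕ) (v : ℝ) : HasDerivAt (Tr (n+1)) (Tr n v) v := by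
  have h1 : HasDerivAt (fun v : ℝ => Real.exp (-v)) (-Real.exp (-v)) v := by
    exact ((Real.hasDerivAt_exp (-v)).comp v (hasDerivAt_id v).neg).congr_deriv (by simp)
  have h2 := hasDerivAt_sumpow n v
  have h3 := (h1.sub h2).const_mul ((-1:ℝ)^(n+1))
  have : HasDerivAt (Tr (n+1)) ((-1:ℝ)^(n+1) * (-Real.exp (-v) - -(∑ j ∈ Finset.range n, (-v)^j / (Nat.factorial j)))) v := h3
  convert this using 1
  rw [Tr, pow_succ]; ring

lemma hasDerivAt_Wo (n : ℕ) (v : ℝ) : HasDerivAt (Wo n) (We n v) v := by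
  unfold Wo We
  refine HasDerivAt.fun_sum fun k _ => ?_
  have h := (hasDerivAt_pow (2*k+1) v).div_const ((Nat.factorial (2*k+1) : ℝ))
  refine h.congr_deriv (Eq.symm ?_)
  have h1 : ((2*k+1 : ℕ) : ℝ) ≠ 0 := by positivity
  rw [Nat.factorial_succ]
  push_cast
  field_simp

lemma Tr_even_eq (n : ℕ) (v : ℝ) : Tr (2*n) v = Real.exp (-v) + Wo n v - We n v := by
  have hsum : ∑ j ∈ Finset.range (2*n), (-v)^j / (Nat.factorial j)
      = We n v - Wo n v := by
    induction n with
    | zero => simp [We, Wo]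
    | succ k ih =>
      have : 2*(k+1) = (2*k) + 1 + 1 := by ring
      rw [this, Finset.sum_range_succ, Finset.sum_range_succ, ih]
      unfold We Wo
      rw [Finset.sum_range_succ, Finset.sum_range_succ]
      have he : (-v)^(2*k) = v^(2*k) := Even.neg_pow ⟨k, by ring⟩ v
      have ho : (-v)^(2*k+1) = -v^(2*k+1) := Odd.neg_pow ⟨k, by ring⟩ v
      rw [he, ho]
      ring
  rw [Tr, hsum]
  have : ((-1:ℝ))^(2*n) = 1 := by rw [pow_mul]; norm_num
  rw [this]; ring

lemma telescope_alt (n : ℕ) (B : ℕ → ℝ) :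
    ∑ i ∈ Finset.range n, (-1:ℝ)^i * (B i + B (i+1)) = B 0 - (-1:ℝ)^n * B n := by
  induction n with
  | zero => simp
  | succ k ih => rw [Finset.sum_range_succ, ih, pow_succ]; ring

lemma claimB (n : ℕ) (x y : ℝ) :
    ∑ i ∈ Finset.range n, (-1:ℝ)^i *
      (Tr (n+i+1) x * Tr (n-i) y - Tr (n+i+1) y * Tr (n-i) x)
    = (-1:ℝ)^(n+1) * (Wo n (x - y) - Real.exp (-y) * Wo n x + Real.exp (-x) * Wo n y) := by
  set a := x - y with ha
  set g : ℝ → ℝ := fun t =>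
    (∑ i ∈ Finset.range n, (-1:ℝ)^i *
      (Tr (n+i+1) (a+t) * Tr (n-i) t - Tr (n+i+1) t * Tr (n-i) (a+t)))
    - (-1:ℝ)^(n+1) * (Wo n a - Real.exp (-t) * Wo n (a+t) + Real.exp (-(a+t)) * Wo n t)
    with hgdef
  have hderiv : ∀ t : ℝ, HasDerivAt g 0 t := by
    intro t
    have hTa : ∀ k : ℕ, HasDerivAt (fun t : ℝ => Tr (k+1) (a+t)) (Tr k (a+t)) t := by
      intro k
      exact ((hasDerivAt_Tr k (a+t)).comp t ((hasDerivAt_id t).const_add a)).congr_deriv (by simp)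
    have hWa : HasDerivAt (fun t : ℝ => Wo n (a+t)) (We n (a+t)) t := by
      exact ((hasDerivAt_Wo n (a+t)).comp t ((hasDerivAt_id t).const_add a)).congr_deriv (by simp)
    have hEt : HasDerivAt (fun t : ℝ => Real.exp (-t)) (-Real.exp (-t)) t := by
      exact ((Real.hasDerivAt_exp (-t)).comp t (hasDerivAt_id t).neg).congr_deriv (by simp)
    have hEa : HasDerivAt (fun t : ℝ => Real.exp (-(a+t))) (-Real.exp (-(a+t))) t := by
      refine ((Real.hasDerivAt_exp (-(a+t))).comp t
        (((hasDerivAt_id t).const_add a).neg)).congr_deriv ?_; simp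
    set B : ℕ → ℝ := fun j => Tr (n+j) (a+t) * Tr (n-j) t - Tr (n+j) t * Tr (n-j) (a+t)
      with hB
    have hsum : HasDerivAt (fun t => ∑ i ∈ Finset.range n, (-1:ℝ)^i *
        (Tr (n+i+1) (a+t) * Tr (n-i) t - Tr (n+i+1) t * Tr (n-i) (a+t)))
        (∑ i ∈ Finset.range n, (-1:ℝ)^i * (B i + B (i+1))) t := by
      refine HasDerivAt.fun_sum fun i hi => ?_
      have hin : i < n := Finset.mem_range.mp hi
      have hni : n - i = (n - (i+1)) + 1 := by omega
      have hTt1 : HasDerivAt (fun t : ℝ => Tr (n-i) t) (Tr (n-(i+1)) t) t := by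
        rw [hni]; exact hasDerivAt_Tr _ t
      have hTa1 : HasDerivAt (fun t : ℝ => Tr (n-i) (a+t)) (Tr (n-(i+1)) (a+t)) t := by
        rw [hni]; exact hTa _
      have h1 := (hTa (n+i)).mul hTt1
      have h2 := (hasDerivAt_Tr (n+i) t).mul hTa1
      have h3 := (h1.sub h2).const_mul ((-1:ℝ)^i)
      refine h3.congr_deriv (Eq.symm ?_)
      simp only [hB]
      ring
    have hrhs : HasDerivAt (fun t => (-1:ℝ)^(n+1) *
        (Wo n a - Real.exp (-t) * Wo n (a+t) + Real.exp (-(a+t)) * Wo n t))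
        ((-1:ℝ)^(n+1) * (0 - ((-Real.exp (-t)) * Wo n (a+t) + Real.exp (-t) * We n (a+t))
          + ((-Real.exp (-(a+t))) * Wo n t + Real.exp (-(a+t)) * We n t))) t := by
      exact (((hasDerivAt_const t (Wo n a)).sub (hEt.mul hWa)).add
        (hEa.mul (hasDerivAt_Wo n t))).const_mul _
    have htot := hsum.sub hrhs
    refine htot.congr_deriv (Eq.symm ?_)
    rw [telescope_alt n B]
    have hB0 : B 0 = 0 := by simp only [hB, Nat.sub_zero, Nat.add_zero]; ring
    have hBn : B n = Tr (2*n) (a+t) * Real.exp (-t) - Tr (2*n) t * Real.exp (-(a+t)) := by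
      simp only [hB, two_mul, Nat.sub_self, Tr_zero]
    rw [hB0, hBn, Tr_even_eq, Tr_even_eq, pow_succ]
    ring
  have hdiff : Differentiable ℝ g := fun t => (hderiv t).differentiableAt
  have hconst := is_const_of_deriv_eq_zero hdiff (fun t => (hderiv t).deriv) y 0
  have hg0 : g 0 = 0 := by
    simp only [hgdef]
    have h1 : ∀ i ∈ Finset.range n, (-1:ℝ)^i *
        (Tr (n+i+1) (a+0) * Tr (n-i) 0 - Tr (n+i+1) 0 * Tr (n-i) (a+0)) = 0 := by
      intro i hi
      have hin : i < n := Finset.mem_range.mp hi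
      rw [Tr_at_zero (by omega), Tr_at_zero (by omega)]
      ring
    rw [Finset.sum_eq_zero h1]
    simp [Wo_at_zero]
  have hgy : g y = 0 := by rw [hconst, hg0]
  have hay : a + y = x := by rw [ha]; ring
  simp only [hgdef, hay] at hgy
  linarith [hgy]

noncomputable def Fa (n : ℕ) (x y s : ℝ) : ℝ :=
  (∑ i ∈ Finset.range n, (-1:ℝ)^(i+1) * (Tr (n+i+1) (x-s) * Tr (n-i) (y-s)))
  + (-1:ℝ)^n * (Real.exp (2*s-x-y)/2 + Real.exp (s-y) * Wo n (x-s))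

lemma hasDerivAt_Fa (n : ℕ) (x y s : ℝ) :
    HasDerivAt (Fa n x y) (Tr n (x-s) * Tr n (y-s)) s := by
  have hTx : ∀ k : ℕ, HasDerivAt (fun s : ℝ => Tr (k+1) (x-s)) (-Tr k (x-s)) s := by
    intro k
    exact ((hasDerivAt_Tr k (x-s)).comp s ((hasDerivAt_id s).const_sub x)).congr_deriv (by simp)
  have hTy : ∀ k : ℕ, HasDerivAt (fun s : ℝ => Tr (k+1) (y-s)) (-Tr k (y-s)) s := by
    intro k
    exact ((hasDerivAt_Tr k (y-s)).comp s ((hasDerivAt_id s).const_sub y)).congr_deriv (by simp)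
  have hWx : HasDerivAt (fun s : ℝ => Wo n (x-s)) (-We n (x-s)) s := by
    exact ((hasDerivAt_Wo n (x-s)).comp s ((hasDerivAt_id s).const_sub x)).congr_deriv (by simp)
  have hE1 : HasDerivAt (fun s : ℝ => Real.exp (2*s-x-y)) (2*Real.exp (2*s-x-y)) s := by
    have h : HasDerivAt (fun s : ℝ => 2*s-x-y) 2 s := by
      exact ((((hasDerivAt_id s).const_mul (2:ℝ)).sub_const x).sub_const y).congr_deriv (by simp)
    refine ((Real.hasDerivAt_exp (2*s-x-y)).comp s h).congr_deriv ?_; ring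
  have hE2 : HasDerivAt (fun s : ℝ => Real.exp (s-y)) (Real.exp (s-y)) s := by
    refine ((Real.hasDerivAt_exp (s-y)).comp s ((hasDerivAt_id s).sub_const y)).congr_deriv ?_; simp
  set B : ℕ → ℝ := fun j => Tr (n+j) (x-s) * Tr (n-j) (y-s) with hB
  have hsum : HasDerivAt (fun s => ∑ i ∈ Finset.range n,
      (-1:ℝ)^(i+1) * (Tr (n+i+1) (x-s) * Tr (n-i) (y-s)))
      (∑ i ∈ Finset.range n, (-1:ℝ)^i * (B i + B (i+1))) s := by
    refine HasDerivAt.fun_sum fun i hi => ?_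
    have hin : i < n := Finset.mem_range.mp hi
    have hni : n - i = (n - (i+1)) + 1 := by omega
    have hTy1 : HasDerivAt (fun s : ℝ => Tr (n-i) (y-s)) (-Tr (n-(i+1)) (y-s)) s := by
      rw [hni]; exact hTy _
    have h1 := ((hTx (n+i)).mul hTy1).const_mul ((-1:ℝ)^(i+1))
    refine h1.congr_deriv (Eq.symm ?_)
    simp only [hB, pow_succ]
    ring
  have hrest : HasDerivAt (fun s => (-1:ℝ)^n *
      (Real.exp (2*s-x-y)/2 + Real.exp (s-y) * Wo n (x-s)))
      ((-1:ℝ)^n * ((2*Real.exp (2*s-x-y))/2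
        + (Real.exp (s-y) * Wo n (x-s) + Real.exp (s-y) * (-We n (x-s))))) s := by
    exact ((hE1.div_const 2).add (hE2.mul hWx)).const_mul _
  have htot := hsum.add hrest
  refine htot.congr_deriv (Eq.symm ?_)
  rw [telescope_alt n B]
  have hB0 : B 0 = Tr n (x-s) * Tr n (y-s) := by
    simp only [hB, Nat.sub_zero, Nat.add_zero]
  have hBn : B n = Tr (2*n) (x-s) * Real.exp (-(y-s)) := by
    simp only [hB, two_mul, Nat.sub_self, Tr_zero]
  rw [hB0, hBn, Tr_even_eq]
  have he1 : Real.exp (-(y-s)) = Real.exp (s-y) := by ring_nf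
  have he2 : Real.exp (-(x-s)) * Real.exp (s-y) = Real.exp (2*s-x-y) := by
    rw [← Real.exp_add]; ring_nf
  rw [he1, ← he2]
  ring

noncomputable def Rk (n : ℕ) (x s : ℝ) : ℝ := if s ≤ x then Tr n (x - s) else 0

noncomputable def Kk (n : ℕ) (x y : ℝ) : ℝ := ∫ s in (0:ℝ)..1, Rk n x s * Rk n y s

lemma continuous_Tr (n : ℕ) : Continuous (Tr n) := by
  unfold Tr
  refine continuous_const.mul (Continuous.sub ?_ ?_)
  · exact Real.continuous_exp.comp continuous_neg
  · exact continuous_finset_sum _ fun j _ =>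
      ((continuous_neg.pow j).div_const _)

lemma RR_indicator (n : ℕ) (x y : ℝ) :
    (fun s => Rk n x s * Rk n y s)
      = (Set.Iic (min x y)).indicator (fun s => Tr n (x - s) * Tr n (y - s)) := by
  funext s
  simp only [Rk, Set.indicator, Set.mem_Iic, le_min_iff]
  split_ifs with h1 h2 h3 h3 h2 <;> try tauto
  all_goals simp_all
  all_goals ring

lemma RR_integrable (n : ℕ) (x y a b : ℝ) :
    IntervalIntegrable (fun s => Rk n x s * Rk n y s) MeasureTheory.volume a b := by
  rw [RR_indicator, intervalIntegrable_iff]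
  refine MeasureTheory.Integrable.indicator ?_ measurableSet_Iic
  have hc : Continuous (fun s : ℝ => Tr n (x - s) * Tr n (y - s)) :=
    ((continuous_Tr n).comp (continuous_const.sub continuous_id)).mul
      ((continuous_Tr n).comp (continuous_const.sub continuous_id))
  exact (hc.intervalIntegrable a b).def'
  
lemma Kk_symm (n : ℕ) (x y : ℝ) : Kk n x y = Kk n y x := by
  unfold Kk
  refine intervalIntegral.integral_congr fun s _ => ?_
  exact mul_comm _ _

lemma Gm_eq (n : ℕ) (t : ℝ) (ht : 0 ≤ t) :
    Gm (n+1) t = ((Real.exp t - Real.exp (-t))/2 - Wo n t)/2 := by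
  rcases eq_or_lt_of_le ht with h | h
  · rw [← h]
    simp [Gm, Wo_at_zero, Real.sign_zero]
  · unfold Gm
    rw [Real.sign_of_pos h]
    have : (n + 1 - 1) = n := by omega
    rw [this]
    unfold Wo
    ring

lemma Gm_even (m : ℕ) (t : ℝ) : Gm m (-t) = Gm m t := by
  unfold Gm
  rw [Real.sign_neg, neg_neg]
  have h : ∑ k ∈ Finset.range (m-1), (-t)^(2*k+1) / (Nat.factorial (2*k+1))
      = -∑ k ∈ Finset.range (m-1), t^(2*k+1) / (Nat.factorial (2*k+1)) := by
    rw [← Finset.sum_neg_distrib]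
    refine Finset.sum_congr rfl fun k _ => ?_
    rw [Odd.neg_pow ⟨k, by ring⟩, neg_div]
  rw [h]
  ring

noncomputable def Nn (n : ℕ) (x y : ℝ) : ℝ :=
  (-1:ℝ)^n * ((Real.exp (x-y) + Real.exp (y-x))/4 + Wo n (x-y)/2
    - Real.exp (-x-y)/2 - Real.exp (-y) * Wo n x)
  - ∑ i ∈ Finset.range n, (-1:ℝ)^(i+1) * (Tr (n+i+1) x * Tr (n-i) y)

lemma Nn_symm (n : ℕ) (x y : ℝ) : Nn n x y = Nn n y x := by
  unfold Nn
  have h1 : ∑ i ∈ Finset.range n, (-1:ℝ)^(i+1) * (Tr (n+i+1) x * Tr (n-i) y)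
      - ∑ i ∈ Finset.range n, (-1:ℝ)^(i+1) * (Tr (n+i+1) y * Tr (n-i) x)
      = -∑ i ∈ Finset.range n, (-1:ℝ)^i *
          (Tr (n+i+1) x * Tr (n-i) y - Tr (n+i+1) y * Tr (n-i) x) := by
    rw [← Finset.sum_neg_distrib, ← Finset.sum_sub_distrib]
    refine Finset.sum_congr rfl fun i _ => ?_
    rw [pow_succ]; ring
  have h2 := claimB n x y
  have h3 : Wo n (y - x) = -Wo n (x - y) := by
    rw [show y - x = -(x-y) by ring, Wo_neg]
  rw [h3]
  have he : Real.exp (-y-x) = Real.exp (-x-y) := by ring_nf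
  rw [he]
  linear_combination -h1 + h2

lemma Kk_rep (n : ℕ) {x y : ℝ} (h0 : 0 ≤ y) (hyx : y ≤ x) (h1 : y ≤ 1) :
    Kk n x y = (-1:ℝ)^(n+1) * Gm (n+1) (x - y) + Nn n x y := by
  have hadd := intervalIntegral.integral_add_adjacent_intervals
    (RR_integrable n x y 0 y) (RR_integrable n x y y 1)
  have h2 : ∫ s in y..(1:ℝ), Rk n x s * Rk n y s = 0 := by
    rw [intervalIntegral.integral_congr_ae (g := fun _ => (0:ℝ))
      (Filter.Eventually.of_forall fun s hs => ?_)]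
    · simp
    · rw [Set.uIoc_of_le h1] at hs
      have hns : ¬ (s ≤ y) := not_le.mpr hs.1
      simp [Rk, hns]
  have h3 : ∫ s in (0:ℝ)..y, Rk n x s * Rk n y s
      = ∫ s in (0:ℝ)..y, Tr n (x-s) * Tr n (y-s) := by
    refine intervalIntegral.integral_congr_ae (Filter.Eventually.of_forall fun s hs => ?_)
    rw [Set.uIoc_of_le h0] at hs
    have hsy : s ≤ y := hs.2
    have hsx : s ≤ x := le_trans hsy hyx
    simp [Rk, hsy, hsx]
  have h4 : ∫ s in (0:ℝ)..y, Tr n (x-s) * Tr n (y-s) = Fa n x y y - Fa n x y 0 := by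
    refine intervalIntegral.integral_eq_sub_of_hasDerivAt
      (fun s _ => hasDerivAt_Fa n x y s) ?_
    exact (((continuous_Tr n).comp (continuous_const.sub continuous_id)).mul
      ((continuous_Tr n).comp (continuous_const.sub continuous_id))).intervalIntegrable _ _
  have h5 : Fa n x y y = (-1:ℝ)^n * (Real.exp (y-x)/2 + Wo n (x-y)) := by
    unfold Fa
    rw [Finset.sum_eq_zero, show 2*y-x-y = y-x by ring, sub_self, Real.exp_zero]
    · ring
    · intro i hi
      rw [sub_self, Tr_at_zero (n := n - i) (by have := Finset.mem_range.mp hi; omega)]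
      ring
  have h6 : Fa n x y 0 = (∑ i ∈ Finset.range n, (-1:ℝ)^(i+1) * (Tr (n+i+1) x * Tr (n-i) y))
      + (-1:ℝ)^n * (Real.exp (-x-y)/2 + Real.exp (-y) * Wo n x) := by
    unfold Fa
    rw [show 2*(0:ℝ)-x-y = -x-y by ring, show (0:ℝ)-y = -y by ring]
    simp [sub_zero]
  rw [Kk, ← hadd, h2, h3, h4, h5, h6, add_zero, Gm_eq n (x-y) (by linarith), Nn]
  have he : Real.exp (-(x-y)) = Real.exp (y-x) := by ring_nf
  rw [he]
  ring

lemma Kk_rep' (n : ℕ) {x y : ℝ} (hx : x ∈ Set.Icc (0:ℝ) 1) (hy : y ∈ Set.Icc (0:ℝ) 1) :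
    Kk n x y = (-1:ℝ)^(n+1) * Gm (n+1) (x - y) + Nn n x y := by
  rcases le_total y x with h | h
  · exact Kk_rep n hy.1 h hy.2
  · rw [Kk_symm, Nn_symm, show x - y = -(y-x) by ring, Gm_even]
    exact Kk_rep n hx.1 h hx.2

lemma key_nonneg (n N : ℕ) (x : Fin (N+1) → ℝ) (hx : ∀ β, x β ∈ Set.Icc (0:ℝ) 1)
    (D : Fin (N+1) → ℝ)
    (hpow : ∀ j : ℕ, j < n → ∑ γ, D γ * (x γ)^j = 0)
    (hexp : ∑ γ, D γ * Real.exp (-(x γ)) = 0) :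
    0 ≤ (-1:ℝ)^(n+1) * ∑ β, ∑ γ, D β * D γ * Gm (n+1) (x β - x γ) := by
  -- the functional annihilates Tr k for k ≤ n
  have hTrsum : ∀ k : ℕ, k ≤ n → ∑ γ, D γ * Tr k (x γ) = 0 := by
    intro k hk
    have h1 : ∀ γ : Fin (N+1), D γ * Tr k (x γ)
        = (-1:ℝ)^k * (D γ * Real.exp (-(x γ)))
          - ∑ j ∈ Finset.range k, ((-1:ℝ)^(k+j) / (Nat.factorial j)) * (D γ * (x γ)^j) := by
      intro γ
      rw [Tr]
      simp only [mul_sub, Finset.mul_sum]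
      congr 1
      · ring
      · refine Finset.sum_congr rfl fun j _ => ?_
        rw [neg_pow, pow_add]
        ring
    rw [Finset.sum_congr rfl fun γ _ => h1 γ, Finset.sum_sub_distrib, ← Finset.mul_sum, hexp,
      mul_zero, Finset.sum_comm]
    rw [Finset.sum_eq_zero]
    · ring
    · intro j hj
      rw [← Finset.mul_sum, hpow j (lt_of_lt_of_le (Finset.mem_range.mp hj) hk), mul_zero]
  -- helpers for double sums
  have hcmul : ∀ (c : ℝ) (Wf : Fin (N+1) → Fin (N+1) → ℝ),
      (∑ β, ∑ γ, c * Wf β γ) = c * ∑ β, ∑ γ, Wf β γ := by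
    intro c Wf
    rw [Finset.mul_sum]
    exact Finset.sum_congr rfl fun β _ => (Finset.mul_sum _ _ _).symm
  have hz2 : ∀ (c : ℝ) (u v : Fin (N+1) → ℝ), (∑ γ, v γ) = 0 →
      (∑ β, ∑ γ, c * (u β * v γ)) = 0 := by
    intro c u v hv
    have h : ∀ β, ∑ γ, c * (u β * v γ) = (c * u β) * ∑ γ, v γ := by
      intro β
      rw [Finset.mul_sum]
      exact Finset.sum_congr rfl fun γ _ => by ring
    rw [Finset.sum_congr rfl fun β _ => h β, hv]
    simp
  have hz1 : ∀ (c : ℝ) (u v : Fin (N+1) → ℝ), (∑ β, u β) = 0 →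
      (∑ β, ∑ γ, c * (u β * v γ)) = 0 := by
    intro c u v hu
    have h : ∀ β, ∑ γ, c * (u β * v γ) = (∑ γ, c * v γ) * u β := by
      intro β
      rw [Finset.sum_mul]
      exact Finset.sum_congr rfl fun γ _ => by ring
    rw [Finset.sum_congr rfl fun β _ => h β, ← Finset.mul_sum, hu, mul_zero]
  -- swap double sum with an inner finset sum
  have hswap3 : ∀ (s : Finset ℕ) (F : ℕ → Fin (N+1) → Fin (N+1) → ℝ),
      (∑ β, ∑ γ, ∑ i ∈ s, F i β γ) = ∑ i ∈ s, ∑ β, ∑ γ, F i β γ := by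
    intro s F
    rw [Finset.sum_congr rfl fun β (_ : β ∈ Finset.univ) => Finset.sum_comm, Finset.sum_comm]
  -- the Wo double sum vanishes
  have hW0 : ∑ β, ∑ γ, D β * D γ * Wo n (x β - x γ) = 0 := by
    have hpair : ∀ β γ : Fin (N+1), D β * D γ * Wo n (x β - x γ)
        = ∑ k ∈ Finset.range n, ∑ j ∈ Finset.range (2*k+1+1),
            (((-1:ℝ)^(j+(2*k+1)) * ((2*k+1).choose j) / (Nat.factorial (2*k+1)))
              * ((D β * (x β)^j) * (D γ * (x γ)^(2*k+1-j)))) := by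
      intro β γ
      rw [Wo, Finset.mul_sum]
      refine Finset.sum_congr rfl fun k _ => ?_
      rw [sub_pow, Finset.sum_div, Finset.mul_sum]
      refine Finset.sum_congr rfl fun j _ => by push_cast; ring
    rw [Finset.sum_congr rfl fun β _ => Finset.sum_congr rfl fun γ _ => hpair β γ]
    have hsw : (∑ β, ∑ γ, ∑ k ∈ Finset.range n, ∑ j ∈ Finset.range (2*k+1+1),
            (((-1:ℝ)^(j+(2*k+1)) * ((2*k+1).choose j) / (Nat.factorial (2*k+1)))
              * ((D β * (x β)^j) * (D γ * (x γ)^(2*k+1-j)))))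
        = ∑ k ∈ Finset.range n, ∑ β, ∑ γ, ∑ j ∈ Finset.range (2*k+1+1),
            (((-1:ℝ)^(j+(2*k+1)) * ((2*k+1).choose j) / (Nat.factorial (2*k+1)))
              * ((D β * (x β)^j) * (D γ * (x γ)^(2*k+1-j)))) := by
      exact hswap3 (Finset.range n) _
    rw [hsw]
    refine Finset.sum_eq_zero fun k hk => ?_
    rw [hswap3 (Finset.range (2*k+1+1)) _]
    refine Finset.sum_eq_zero fun j hj => ?_
    have hkn : k < n := Finset.mem_range.mp hk
    have hjr : j < 2*k+1+1 := Finset.mem_range.mp hj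
    rcases lt_or_ge j n with hjn | hjn
    · exact hz1 _ _ _ (hpow j hjn)
    · exact hz2 _ _ _ (hpow (2*k+1-j) (by omega))
  -- the Nn double sum vanishes
  have hexp2 : ∀ X Y : ℝ, Nn n X Y
      = (-1:ℝ)^n/4 * (Real.exp X * Real.exp (-Y))
        + (-1:ℝ)^n/4 * (Real.exp (-X) * Real.exp Y)
        + (-1:ℝ)^n/2 * Wo n (X - Y)
        - (-1:ℝ)^n/2 * (Real.exp (-X) * Real.exp (-Y))
        - (-1:ℝ)^n * (Wo n X * Real.exp (-Y))
        - ∑ i ∈ Finset.range n, (-1:ℝ)^(i+1) * (Tr (n+i+1) X * Tr (n-i) Y) := by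
    intro X Y
    rw [Nn]
    have e1 : Real.exp (X - Y) = Real.exp X * Real.exp (-Y) := by
      rw [← Real.exp_add]; ring_nf
    have e2 : Real.exp (Y - X) = Real.exp (-X) * Real.exp Y := by
      rw [← Real.exp_add]; ring_nf
    have e3 : Real.exp (-X - Y) = Real.exp (-X) * Real.exp (-Y) := by
      rw [← Real.exp_add]; ring_nf
    rw [e1, e2, e3]
    ring
  have hNn0 : ∑ β, ∑ γ, D β * D γ * Nn n (x β) (x γ) = 0 := by
    have hsplit : ∀ β γ : Fin (N+1), D β * D γ * Nn n (x β) (x γ)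
        = (-1:ℝ)^n/4 * ((D β * Real.exp (x β)) * (D γ * Real.exp (-(x γ))))
          + (-1:ℝ)^n/4 * ((D β * Real.exp (-(x β))) * (D γ * Real.exp (x γ)))
          + (-1:ℝ)^n/2 * (D β * D γ * Wo n (x β - x γ))
          - (-1:ℝ)^n/2 * ((D β * Real.exp (-(x β))) * (D γ * Real.exp (-(x γ))))
          - (-1:ℝ)^n * ((D β * Wo n (x β)) * (D γ * Real.exp (-(x γ))))
          - ∑ i ∈ Finset.range n, (-1:ℝ)^(i+1)
              * ((D β * Tr (n+i+1) (x β)) * (D γ * Tr (n-i) (x γ))) := by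
      intro β γ
      have hsum_eq : D β * D γ * (∑ i ∈ Finset.range n, (-1:ℝ)^(i+1)
            * (Tr (n+i+1) (x β) * Tr (n-i) (x γ)))
          = ∑ i ∈ Finset.range n, (-1:ℝ)^(i+1)
              * ((D β * Tr (n+i+1) (x β)) * (D γ * Tr (n-i) (x γ))) := by
        rw [Finset.mul_sum]
        exact Finset.sum_congr rfl fun i _ => by ring
      rw [hexp2]
      linear_combination -hsum_eq
    rw [Finset.sum_congr rfl fun β _ => Finset.sum_congr rfl fun γ _ => hsplit β γ]
    simp only [Finset.sum_add_distrib, Finset.sum_sub_distrib]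
    rw [hz2 _ _ _ hexp, hz1 _ _ _ hexp, hcmul, hW0, mul_zero, hz2 _ _ _ hexp, hz2 _ _ _ hexp,
      hswap3 (Finset.range n) _, Finset.sum_eq_zero
        (fun i _ => hz2 _ _ _ (hTrsum (n-i) (Nat.sub_le n i)))]
    norm_num
  -- the K double sum equals an integral of a square
  have hKpos : 0 ≤ ∑ β, ∑ γ, D β * D γ * Kk n (x β) (x γ) := by
    have h1 : ∀ s : ℝ, (∑ β, D β * Rk n (x β) s)^2
        = ∑ β, ∑ γ, (D β * D γ) * (Rk n (x β) s * Rk n (x γ) s) := by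
      intro s
      rw [sq, Finset.sum_mul_sum]
      exact Finset.sum_congr rfl fun β _ => Finset.sum_congr rfl fun γ _ => by ring
    have hint : ∀ (β : Fin (N+1)), IntervalIntegrable
        (fun s => ∑ γ, (D β * D γ) * (Rk n (x β) s * Rk n (x γ) s)) MeasureTheory.volume 0 1 :=
      fun β => by
        rw [intervalIntegrable_iff]
        exact MeasureTheory.integrable_finset_sum Finset.univ
          (fun γ _ => intervalIntegrable_iff.mp
            ((RR_integrable n (x β) (x γ) 0 1).const_mul (D β * D γ)))
    have heq : (∫ s in (0:ℝ)..1, (∑ β, D β * Rk n (x β) s)^2)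
        = ∑ β, ∑ γ, D β * D γ * Kk n (x β) (x γ) := by
      calc (∫ s in (0:ℝ)..1, (∑ β, D β * Rk n (x β) s)^2)
          = ∫ s in (0:ℝ)..1, ∑ β, ∑ γ, (D β * D γ) * (Rk n (x β) s * Rk n (x γ) s) :=
            intervalIntegral.integral_congr (fun s _ => h1 s)
        _ = ∑ β, ∫ s in (0:ℝ)..1, ∑ γ, (D β * D γ) * (Rk n (x β) s * Rk n (x γ) s) :=
            intervalIntegral.integral_finset_sum (fun β _ => hint β)
        _ = ∑ β, ∑ γ, D β * D γ * Kk n (x β) (x γ) := by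
            refine Finset.sum_congr rfl fun β _ => ?_
            have h3 : (∫ s in (0:ℝ)..1, ∑ γ, (D β * D γ) * (Rk n (x β) s * Rk n (x γ) s))
                = ∑ γ, ∫ s in (0:ℝ)..1, (D β * D γ) * (Rk n (x β) s * Rk n (x γ) s) :=
              intervalIntegral.integral_finset_sum
                (fun γ _ => (RR_integrable n (x β) (x γ) 0 1).const_mul _)
            rw [h3]
            refine Finset.sum_congr rfl fun γ _ => ?_
            rw [intervalIntegral.integral_const_mul, Kk]
    rw [← heq]
    exact intervalIntegral.integral_nonneg (by norm_num) (fun s _ => sq_nonneg _)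
  -- representation
  have hrep : ∑ β, ∑ γ, D β * D γ * Kk n (x β) (x γ)
      = (-1:ℝ)^(n+1) * (∑ β, ∑ γ, D β * D γ * Gm (n+1) (x β - x γ))
        + ∑ β, ∑ γ, D β * D γ * Nn n (x β) (x γ) := by
    have h1 : ∀ β γ : Fin (N+1), D β * D γ * Kk n (x β) (x γ)
        = (-1:ℝ)^(n+1) * (D β * D γ * Gm (n+1) (x β - x γ))
          + D β * D γ * Nn n (x β) (x γ) := by
      intro β γ
      rw [Kk_rep' n (hx β) (hx γ)]
      ring
    rw [Finset.sum_congr rfl fun β _ => Finset.sum_congr rfl fun γ _ => h1 β γ]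
    simp only [Finset.sum_add_distrib]
    rw [hcmul]
  rw [hrep, hNn0, add_zero] at hKpos
  exact hKpos

/-- Any solution `(C̊, p, d)` of the Lagrange system minimizes the squared norm
`Q` of the error functional among all coefficient vectors `C` satisfying the same
constraints `Σ_γ C_γ x_γ^α = z^α` (α = 0,…,m−2) and `Σ_γ C_γ e^{−x_γ} = e^{−z}`. -/
theorem system_solution_minimizes (m N : ℕ) (hm : 1 ≤ m) (hmN : m ≤ N + 1)
    (x : Fin (N + 1) → ℝ) (hmono : StrictMono x)
    (hx : ∀ β, x β ∈ Set.Icc (0 : ℝ) 1)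
    (z : ℝ) (hz : z ∈ Set.Icc (0 : ℝ) 1)
    (C0 : Fin (N + 1) → ℝ) (p : Fin (m - 1) → ℝ) (d : ℝ)
    (hsys : ∀ β, (∑ γ, C0 γ * Gm m (x β - x γ))
        + (∑ α : Fin (m - 1), p α * x β ^ (α : ℕ))
        + d * Real.exp (-(x β)) = Gm m (z - x β))
    (hpoly : ∀ α : Fin (m - 1), ∑ γ, C0 γ * x γ ^ (α : ℕ) = z ^ (α : ℕ))
    (hexp : ∑ γ, C0 γ * Real.exp (-(x γ)) = Real.exp (-z)) :
    ∀ C : Fin (N + 1) → ℝ,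
      (∀ α : Fin (m - 1), ∑ γ, C γ * x γ ^ (α : ℕ) = z ^ (α : ℕ)) →
      (∑ γ, C γ * Real.exp (-(x γ)) = Real.exp (-z)) →
      Qm m N x z C0 ≤ Qm m N x z C := by
  intro C hCpoly hCexp
  obtain ⟨n, rfl⟩ : ∃ n, m = n + 1 := ⟨m - 1, by omega⟩
  have hDpow : ∀ j : ℕ, j < n → ∑ γ, (C γ - C0 γ) * (x γ)^j = 0 := by
    intro j hj
    have h1 : ∑ γ, C0 γ * x γ ^ j = z ^ j := hpoly ⟨j, hj⟩
    have h2 : ∑ γ, C γ * x γ ^ j = z ^ j := hCpoly ⟨j, hj⟩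
    calc ∑ γ, (C γ - C0 γ) * (x γ)^j
        = (∑ γ, C γ * x γ ^ j) - ∑ γ, C0 γ * x γ ^ j := by
          rw [← Finset.sum_sub_distrib]
          exact Finset.sum_congr rfl fun γ _ => by ring
      _ = 0 := by rw [h1, h2, sub_self]
  have hDexp : ∑ γ, (C γ - C0 γ) * Real.exp (-(x γ)) = 0 := by
    calc ∑ γ, (C γ - C0 γ) * Real.exp (-(x γ))
        = (∑ γ, C γ * Real.exp (-(x γ))) - ∑ γ, C0 γ * Real.exp (-(x γ)) := by
          rw [← Finset.sum_sub_distrib]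
          exact Finset.sum_congr rfl fun γ _ => by ring
      _ = 0 := by rw [hCexp, hexp, sub_self]
  have hkey : 0 ≤ (-1:ℝ)^(n+1) * ∑ β, ∑ γ, (C β - C0 β) * (C γ - C0 γ) * Gm (n+1) (x β - x γ) :=
    key_nonneg n N x hx (fun γ => C γ - C0 γ) hDpow hDexp
  have hlast : ∑ β, (C β - C0 β) * ((∑ γ, C0 γ * Gm (n+1) (x β - x γ)) - Gm (n+1) (z - x β)) = 0 := by
    have h1 : ∀ β, (C β - C0 β) * ((∑ γ, C0 γ * Gm (n+1) (x β - x γ)) - Gm (n+1) (z - x β))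
        = -(∑ α : Fin (n+1-1), p α * ((C β - C0 β) * x β ^ (α:ℕ)))
          - d * ((C β - C0 β) * Real.exp (-(x β))) := by
      intro β
      have h2 := hsys β
      have h3 : ∑ α : Fin (n+1-1), p α * ((C β - C0 β) * x β ^ (α:ℕ))
          = (C β - C0 β) * ∑ α : Fin (n+1-1), p α * x β ^ (α:ℕ) := by
        rw [Finset.mul_sum]
        exact Finset.sum_congr rfl fun α _ => by ring
      rw [h3]
      linear_combination (C β - C0 β) * h2
    rw [Finset.sum_congr rfl fun β _ => h1 β, Finset.sum_sub_distrib, Finset.sum_neg_distrib]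
    have h4 : ∑ β, ∑ α : Fin (n+1-1), p α * ((C β - C0 β) * x β ^ (α:ℕ))
        = ∑ α : Fin (n+1-1), p α * ∑ β, (C β - C0 β) * x β ^ (α:ℕ) := by
      rw [Finset.sum_comm]
      exact Finset.sum_congr rfl fun α _ => (Finset.mul_sum _ _ _).symm
    have h5 : ∀ α : Fin (n+1-1), ∑ β, (C β - C0 β) * x β ^ (α:ℕ) = 0 :=
      fun α => hDpow α α.isLt
    have h6 : ∑ β, d * ((C β - C0 β) * Real.exp (-(x β)))
        = d * ∑ β, (C β - C0 β) * Real.exp (-(x β)) := (Finset.mul_sum _ _ _).symm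
    rw [h4, Finset.sum_congr rfl (fun α _ => by rw [h5 α, mul_zero]), Finset.sum_const_zero,
      h6, hDexp, mul_zero]
    ring
  have hcross : ∑ β, ∑ γ, C0 β * (C γ - C0 γ) * Gm (n+1) (x β - x γ)
      = ∑ β, ∑ γ, (C β - C0 β) * C0 γ * Gm (n+1) (x β - x γ) := by
    rw [Finset.sum_comm]
    refine Finset.sum_congr rfl fun β _ => Finset.sum_congr rfl fun γ _ => ?_
    rw [show x γ - x β = -(x β - x γ) by ring, Gm_even]
    ring
  have hQ : Qm (n+1) N x z C = Qm (n+1) N x z C0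
      + (-1:ℝ)^(n+1) * ∑ β, ∑ γ, (C β - C0 β) * (C γ - C0 γ) * Gm (n+1) (x β - x γ) := by
    unfold Qm
    have h7 : ∀ β γ : Fin (N+1), C β * C γ * Gm (n+1) (x β - x γ)
        = C0 β * C0 γ * Gm (n+1) (x β - x γ)
          + (C β - C0 β) * C0 γ * Gm (n+1) (x β - x γ)
          + C0 β * (C γ - C0 γ) * Gm (n+1) (x β - x γ)
          + (C β - C0 β) * (C γ - C0 γ) * Gm (n+1) (x β - x γ) := fun β γ => by ring
    have hCC : ∑ β, ∑ γ, C β * C γ * Gm (n+1) (x β - x γ)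
        = ∑ β, ∑ γ, C0 β * C0 γ * Gm (n+1) (x β - x γ)
          + 2 * ∑ β, ∑ γ, (C β - C0 β) * C0 γ * Gm (n+1) (x β - x γ)
          + ∑ β, ∑ γ, (C β - C0 β) * (C γ - C0 γ) * Gm (n+1) (x β - x γ) := by
      rw [Finset.sum_congr rfl fun β _ => Finset.sum_congr rfl fun γ _ => h7 β γ]
      simp only [Finset.sum_add_distrib]
      linear_combination hcross
    have hCz : ∑ β, C β * Gm (n+1) (z - x β)
        = ∑ β, C0 β * Gm (n+1) (z - x β) + ∑ β, (C β - C0 β) * Gm (n+1) (z - x β) := by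
      rw [← Finset.sum_add_distrib]
      exact Finset.sum_congr rfl fun β _ => by ring
    have hsplit2 : ∑ β, ∑ γ, (C β - C0 β) * C0 γ * Gm (n+1) (x β - x γ)
        = ∑ β, (C β - C0 β) * ∑ γ, C0 γ * Gm (n+1) (x β - x γ) :=
      Finset.sum_congr rfl fun β _ => by
        rw [Finset.mul_sum]
        exact Finset.sum_congr rfl fun γ _ => by ring
    have h9 : ∑ β, (C β - C0 β) * ((∑ γ, C0 γ * Gm (n+1) (x β - x γ)) - Gm (n+1) (z - x β))
        = (∑ β, (C β - C0 β) * ∑ γ, C0 γ * Gm (n+1) (x β - x γ))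
          - ∑ β, (C β - C0 β) * Gm (n+1) (z - x β) := by
      rw [← Finset.sum_sub_distrib]
      exact Finset.sum_congr rfl fun β _ => by ring
    have h8 : ∑ β, (C β - C0 β) * ∑ γ, C0 γ * Gm (n+1) (x β - x γ)
        = ∑ β, (C β - C0 β) * Gm (n+1) (z - x β) := by linarith [hlast, h9]
    rw [hCC, hCz, hsplit2, h8]
    ring
  rw [hQ]
  linarith [hkey]
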